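/- A₁ ∩ A₄ = {((0,x),(0,ζ^λ x)) : x ∈ ℂ, |x| = 1, λ ∈ [0,1]}; in particular A₁ ∩ A₄ is homeomorphic to S¹ × [0,1]. -/

import Mathlib

open Complex

/-- `zeta t = exp(2πit/7)`. -/
noncomputable def zeta (t : ℝ) : ℂ := Complex.exp ((2 * Real.pi * t / 7 : ℝ) * Complex.I)

/-- The 3-sphere as the unit sphere in `ℂ × ℂ`. -/
def Sph3 : Set (ℂ × ℂ) := {p | ‖p.1‖ ^ 2 + ‖p.2‖ ^ 2 = 1}

/-- The "diagonal" 3-sphere `Δ_k = {((x₁,x₂),(ζᵏx₁,ζ^{2k}x₂))} ⊆ S³ × S³`. -/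
def Delta (k : ℕ) : Set ((ℂ × ℂ) × (ℂ × ℂ)) :=
  {q | ∃ p ∈ Sph3, q = (p, (zeta k * p.1, zeta (2 * k) * p.2))}

/-- `A_k = {((x₁,x₂),(ζˢx₁,ζ^{2s}x₂)) : (x₁,x₂) ∈ S³, s ∈ [k−1,k]} ⊆ S³ × S³`. -/
def A (k : ℕ) : Set ((ℂ × ℂ) × (ℂ × ℂ)) :=
  {q | ∃ p ∈ Sph3, ∃ s : ℝ, (k : ℝ) - 1 ≤ s ∧ s ≤ k ∧
    q = (p, (zeta s * p.1, zeta (2 * s) * p.2))}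

lemma zeta_add (s t : ℝ) : zeta (s + t) = zeta s * zeta t := by
  unfold zeta
  rw [← Complex.exp_add]
  congr 1
  push_cast
  ring

lemma zeta_ne_zero (t : ℝ) : zeta t ≠ 0 := Complex.exp_ne_zero _

lemma zeta_seven : zeta 7 = 1 := by
  unfold zeta
  have : (2 * Real.pi * 7 / 7 : ℝ) = 2 * Real.pi := by ring
  rw [this]
  push_cast
  exact Complex.exp_two_pi_mul_I

lemma zeta_eq (s t : ℝ) (h : zeta s = zeta t) : ∃ n : ℤ, s = t + 7 * n := by
  unfold zeta at h
  rw [Complex.exp_eq_exp_iff_exists_int] at h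
  obtain ⟨n, hn⟩ := h
  refine ⟨n, ?_⟩
  have him := congrArg Complex.im hn
  simp [Complex.add_im, Complex.mul_im, Complex.mul_re] at him
  have hpi := Real.pi_ne_zero
  have h2 : 2 * Real.pi * s = 2 * Real.pi * (t + 7 * n) := by
    field_simp at him
    rw [him]
  have := mul_left_cancel₀ (by positivity : (2 * Real.pi) ≠ 0) h2
  exact this

lemma key : A 1 ∩ A 4 = {q | ∃ x : ℂ, ‖x‖ = 1 ∧ ∃ l ∈ Set.Icc (0:ℝ) 1,
    q = (((0 : ℂ), x), ((0 : ℂ), zeta l * x))} := by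
  ext q
  simp only [Set.mem_inter_iff, A, Set.mem_setOf_eq]
  constructor
  · rintro ⟨⟨p, hp, s, hs0, hs1, rfl⟩, ⟨p', hp', t, ht0, ht1, heq⟩⟩
    norm_num at hs0 hs1 ht0 ht1
    have hpp : p = p' := congrArg Prod.fst heq
    subst hpp
    have h1 : zeta s * p.1 = zeta t * p.1 := congrArg (fun q => q.2.1) heq
    have h2 : zeta (2 * s) * p.2 = zeta (2 * t) * p.2 := congrArg (fun q => q.2.2) heq
    -- p.1 = 0
    have hp1 : p.1 = 0 := by
      by_contra h
      have := zeta_eq s t (mul_right_cancel₀ h h1)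
      obtain ⟨n, hn⟩ := this
      have h2 : (-4 : ℝ) ≤ 7 * n := by nlinarith
      have h3 : (7 : ℝ) * n ≤ -2 := by nlinarith
      have hn1 : (-1 : ℝ) < (n : ℝ) := by nlinarith
      have hn2 : (n : ℝ) < 0 := by nlinarith
      have : (-1 : ℤ) < n := by exact_mod_cast hn1
      have : n < 0 := by exact_mod_cast hn2
      omega
    have habs : ‖p.2‖ = 1 := by
      have h : ‖p.2‖ ^ 2 = 1 := by
        have h' := hp
        simp only [Sph3, Set.mem_setOf_eq, hp1] at h'
        simpa using h'
      nlinarith [norm_nonneg p.2]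
    have hp2 : p.2 ≠ 0 := by
      intro h0
      rw [h0] at habs
      simp at habs
    obtain ⟨n, hn⟩ := zeta_eq (2 * s) (2 * t) (mul_right_cancel₀ hp2 h2)
    have hne : n = -1 := by
      have h2 : (-8 : ℝ) ≤ 7 * n := by nlinarith
      have h3 : (7 : ℝ) * n ≤ -4 := by nlinarith
      have hn1 : (-2 : ℝ) < (n : ℝ) := by nlinarith
      have hn2 : (n : ℝ) < 0 := by nlinarith
      have a1 : (-2 : ℤ) < n := by exact_mod_cast hn1
      have a2 : n < 0 := by exact_mod_cast hn2
      omega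
    subst hne
    push_cast at hn
    refine ⟨p.2, habs, 2 * s, ⟨by linarith, by linarith⟩, ?_⟩
    simp [Prod.ext_iff, hp1]
  · rintro ⟨x, hx, l, ⟨hl0, hl1⟩, rfl⟩
    have hsph : ((0 : ℂ), x) ∈ Sph3 := by simp [Sph3, hx]
    constructor
    · refine ⟨((0 : ℂ), x), hsph, l / 2, by norm_num; linarith, by norm_num; linarith, ?_⟩
      have : 2 * (l / 2) = l := by ring
      simp [this]
    · refine ⟨((0 : ℂ), x), hsph, l / 2 + 7 / 2, by norm_num; linarith, by norm_num; linarith, ?_⟩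
      have h7 : 2 * (l / 2 + 7 / 2) = l + 7 := by ring
      rw [h7]
      have : zeta (l + 7) = zeta l := by rw [zeta_add, zeta_seven, mul_one]
      simp [this]

lemma zeta_cont : Continuous zeta := by
  unfold zeta
  fun_prop

/-- `A₁ ∩ A₄ = {((0,x),(0,ζ^λx)) : |x| = 1, λ ∈ [0,1]}`; in particular `A₁ ∩ A₄` is
homeomorphic to `S¹ × [0,1]`. -/
theorem stmt_11 :
    A 1 ∩ A 4 = {q | ∃ x : ℂ, ‖x‖ = 1 ∧ ∃ l ∈ Set.Icc (0:ℝ) 1,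
        q = (((0 : ℂ), x), ((0 : ℂ), zeta l * x))} ∧
    Nonempty (↥(A 1 ∩ A 4) ≃ₜ ↥(Metric.sphere (0:ℂ) 1) × ↥(Set.Icc (0:ℝ) 1)) := by
  refine ⟨key, ?_⟩
  rw [key]
  set S : Set ((ℂ × ℂ) × (ℂ × ℂ)) := {q | ∃ x : ℂ, ‖x‖ = 1 ∧ ∃ l ∈ Set.Icc (0:ℝ) 1,
        q = (((0 : ℂ), x), ((0 : ℂ), zeta l * x))} with hS
  have hmem : ∀ (z : ↥(Metric.sphere (0:ℂ) 1) × ↥(Set.Icc (0:ℝ) 1)),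
      ((((0 : ℂ), (z.1 : ℂ)), ((0 : ℂ), zeta z.2 * z.1)) : (ℂ × ℂ) × (ℂ × ℂ)) ∈ S := by
    rintro ⟨⟨x, hx⟩, ⟨l, hl⟩⟩
    exact ⟨x, by simpa using hx, l, hl, rfl⟩
  let e : ↥(Metric.sphere (0:ℂ) 1) × ↥(Set.Icc (0:ℝ) 1) → ↥S :=
    fun z => ⟨(((0 : ℂ), (z.1 : ℂ)), ((0 : ℂ), zeta z.2 * z.1)), hmem z⟩
  have hinj : Function.Injective e := by
    rintro ⟨⟨x, hx⟩, ⟨l, hl⟩⟩ ⟨⟨x', hx'⟩, ⟨l', hl'⟩⟩ h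
    simp only [e, Subtype.mk.injEq, Prod.mk.injEq] at h
    obtain ⟨⟨_, hxx⟩, _, hll⟩ := h
    subst hxx
    have hx0 : x ≠ 0 := by
      intro h0; rw [h0] at hx; simp at hx
    have := zeta_eq l l' (mul_right_cancel₀ hx0 hll)
    obtain ⟨n, hn⟩ := this
    simp only [Set.mem_Icc] at hl hl'
    have hn0 : n = 0 := by
      have h1 : (-1 : ℝ) ≤ 7 * n := by nlinarith
      have h2 : (7 : ℝ) * n ≤ 1 := by nlinarith
      have a1 : (-1 : ℝ) < (n : ℝ) := by nlinarith
      have a2 : (n : ℝ) < 1 := by nlinarith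
      have b1 : (-1 : ℤ) < n := by exact_mod_cast a1
      have b2 : n < 1 := by exact_mod_cast a2
      omega
    subst hn0
    simp at hn
    subst hn
    rfl
  have hsurj : Function.Surjective e := by
    rintro ⟨q, x, hx, l, hl, rfl⟩
    exact ⟨(⟨x, by simpa using hx⟩, ⟨l, hl⟩), rfl⟩
  have hcont : Continuous e := by
    apply Continuous.subtype_mk
    apply Continuous.prodMk
    · exact continuous_const.prodMk (continuous_subtype_val.comp continuous_fst)
    · exact continuous_const.prodMk
        ((zeta_cont.comp (continuous_subtype_val.comp continuous_snd)).mul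
          (continuous_subtype_val.comp continuous_fst))
  exact ⟨(hcont.homeoOfEquivCompactToT2 (f := Equiv.ofBijective e ⟨hinj, hsurj⟩)).symm⟩
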